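/- Suppose |Yᵢ| ≤ k₁ almost surely for all i, and let p ≥ 1 be a real number. With zᵢ(e) = 1{pᵢ(e) = 0}, wᵢ(e) = (1 − zᵢ(e))/(pᵢ(e) + zᵢ(e)), and μ_p(e) = [(1/n)Σᵢ wᵢ(e)^p]^{1/p}, one has (4/n²)Σᵢ wᵢ(e)²·Var(1{dᵢ=e}Yᵢ) ≤ 4k₁²·μ_p(e)/n. -/

import Mathlib

open MeasureTheory ProbabilityTheory Real Finset

/-- With truncated inverse assignment probabilities `wᵢ(e) = (1 − zᵢ(e))/(pᵢ(e) + zᵢ(e))`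
and `μ_p(e) = [(1/n)Σᵢ wᵢ(e)^p]^{1/p}` for a real `p ≥ 1`, if `|Yᵢ| ≤ k₁` a.s. then
`(4/n²)Σᵢ wᵢ(e)²·Var(1{dᵢ=e}Yᵢ) ≤ 4k₁²·μ_p(e)/n`. -/
theorem first_variance_term_bound_without_positivity
    {Ω : Type*} [MeasurableSpace Ω] (P : Measure Ω) [IsProbabilityMeasure P]
    {Δ : Type*} [Fintype Δ] [DecidableEq Δ] [MeasurableSpace Δ] [MeasurableSingletonClass Δ]
    (n : ℕ) (d : Fin n → Ω → Δ) (Y : Fin n → Ω → ℝ)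
    (hd : ∀ i, Measurable (d i)) (hY : ∀ i, Measurable (Y i))
    (k₁ : ℝ) (hbdd : ∀ i, ∀ᵐ ω ∂P, |Y i ω| ≤ k₁)
    (q : ℝ) (hq : 1 ≤ q) (e : Δ)
    -- assignment probabilities `pᵢ(e) = P(dᵢ = e)`
    (p : Fin n → Δ → ℝ) (hp : ∀ i e, p i e = (P {ω | d i ω = e}).toReal)
    -- indicators of zero-probability assignments `zᵢ(e) = 1{pᵢ(e) = 0}`
    (z : Fin n → Δ → ℝ) (hz : ∀ i e, z i e = if p i e = 0 then 1 else 0)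
    -- truncated inverse assignment probabilities `wᵢ(e) = (1 − zᵢ(e))/(pᵢ(e) + zᵢ(e))`
    (w : Fin n → Δ → ℝ) (hw : ∀ i e, w i e = (1 - z i e) / (p i e + z i e))
    -- the moment `μ_q(e) = [(1/n)Σᵢ wᵢ(e)^q]^{1/q}`
    (μ : Δ → ℝ) (hμ : ∀ e, μ e = ((1 / (n : ℝ)) * ∑ i, (w i e) ^ q) ^ (1 / q)) :
    (4 / (n : ℝ) ^ 2) * ∑ i, (w i e) ^ 2
        * variance (fun ω => if d i ω = e then Y i ω else 0) P
      ≤ 4 * k₁ ^ 2 * μ e / n := by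
  rcases Nat.eq_zero_or_pos n with hn | hn
  · subst hn
    simp [hμ, (by positivity : (1:ℝ)/q ≠ 0), Real.zero_rpow]
  have hnpos : (0:ℝ) < n := by exact_mod_cast hn
  have hk₁ : 0 ≤ k₁ := by
    obtain ⟨ω, hω⟩ := (hbdd ⟨0, hn⟩).exists
    exact (abs_nonneg _).trans hω
  have hpnn : ∀ i, 0 ≤ p i e := fun i => by rw [hp]; exact ENNReal.toReal_nonneg
  have hwnn : ∀ i, 0 ≤ w i e := by
    intro i
    rw [hw, hz]
    by_cases h : p i e = 0 <;> simp [h]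
    have := lt_of_le_of_ne (hpnn i) (Ne.symm h)
    positivity
  -- variance bound: Var(1{d=e}Y) ≤ k₁² * p i e
  have hvar : ∀ i, variance (fun ω => if d i ω = e then Y i ω else 0) P ≤ k₁ ^ 2 * p i e := by
    intro i
    set X : Ω → ℝ := fun ω => if d i ω = e then Y i ω else 0 with hX
    have hmeas : Measurable X :=
      Measurable.ite (hd i (measurableSet_singleton e)) (hY i) measurable_const
    have hset : MeasurableSet {ω | d i ω = e} := hd i (measurableSet_singleton e)
    refine (variance_le_expectation_sq (μ := P) hmeas.aestronglyMeasurable).trans ?_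
    have hint : Integrable (X ^ 2) P := by
      refine (integrable_const (k₁ ^ 2)).mono' ((hmeas.pow_const 2).aestronglyMeasurable) ?_
      filter_upwards [hbdd i] with ω hω
      have hXb : |X ω| ≤ k₁ := by
        by_cases h : d i ω = e
        · simpa [hX, h] using hω
        · simp [hX, h, hk₁]
      calc ‖(X ^ 2) ω‖ = |X ω| ^ 2 := by simp [abs_pow]
      _ ≤ k₁ ^ 2 := by gcongr
    have h2 : ∫ ω, (X ^ 2) ω ∂P ≤ ∫ ω, Set.indicator {ω | d i ω = e} (fun _ => k₁ ^ 2) ω ∂P := by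
      apply integral_mono_ae hint
      · exact (integrable_indicator_iff hset).2 (integrableOn_const (measure_ne_top _ _))
      · filter_upwards [hbdd i] with ω hω
        by_cases h : d i ω = e
        · simp only [Pi.pow_apply, hX, h, if_true, Set.indicator, Set.mem_setOf_eq]
          calc Y i ω ^ 2 = |Y i ω| ^ 2 := (sq_abs _).symm
          _ ≤ k₁ ^ 2 := by gcongr
        · simp only [Pi.pow_apply, hX, h, if_false, Set.indicator, Set.mem_setOf_eq]
          norm_num [sq_nonneg]
    refine h2.trans_eq ?_
    rw [integral_indicator_const _ hset, hp]
    simp [mul_comm]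
    exact Or.inl rfl
  -- w² * p = w
  have hw2p : ∀ i, w i e ^ 2 * p i e = w i e := by
    intro i
    rw [hw, hz]
    by_cases h : p i e = 0 <;> simp [h]
    field_simp
  -- mean inequality
  have hmean : (1 / (n:ℝ)) * ∑ i, w i e ≤ μ e := by
    rw [hμ, Finset.mul_sum, Finset.mul_sum]
    exact Real.arith_mean_le_rpow_mean (ι := Fin n) Finset.univ (fun _ => 1/(n:ℝ))
      (fun i => w i e) (fun i _ => by positivity)
      (by simp [Finset.card_univ]; field_simp) (fun i _ => hwnn i) hq
  calc (4 / (n : ℝ) ^ 2) * ∑ i, (w i e) ^ 2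
        * variance (fun ω => if d i ω = e then Y i ω else 0) P
      ≤ (4 / (n : ℝ) ^ 2) * ∑ i, k₁ ^ 2 * w i e := by
        refine mul_le_mul_of_nonneg_left (Finset.sum_le_sum fun i _ => ?_) (by positivity)
        calc w i e ^ 2 * variance (fun ω => if d i ω = e then Y i ω else 0) P
              ≤ w i e ^ 2 * (k₁ ^ 2 * p i e) := by
                have := hvar i
                gcongr
          _ = k₁ ^ 2 * (w i e ^ 2 * p i e) := by ring
          _ = k₁ ^ 2 * w i e := by rw [hw2p]
    _ = 4 * k₁ ^ 2 / n * ((1 / (n:ℝ)) * ∑ i, w i e) := by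
        rw [← Finset.mul_sum]; field_simp
    _ ≤ 4 * k₁ ^ 2 / n * μ e := by gcongr
    _ = 4 * k₁ ^ 2 * μ e / n := by ring
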